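/- arXiv:2110.06834 — 5 statements merged into one kernel-verified Lean document; each statement's English description precedes it below -/
import Mathlib

section
/- If for all covariate values x and treatment levels a, a' the ratio of counterfactual means satisfies 1-τ ≤ E[Y^a | X=x, A=a', Z=1] / E[Y^a | X=x, A=a, Z=1] ≤ 1/(1-τ), then the conditional treatment effect ψ(x) = μ₁(x) - μ₀(x) satisfies ψ(x) ≤ ψ̄(x) + (τ/(1-τ))·μ̄₁(x,1)·P(A=0|X=x,Z=1) + τ·μ̄₀(x,0)·P(A=1|X=x,Z=1), where ψ̄(x) = μ̄₁(x,1) - μ̄₀(x,0). -/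
/-- Sensitivity-analysis upper bound on the conditional treatment effect
ψ(x) = μ₁(x) − μ₀(x), where μ̄ a x a' = E[Y^a | X=x, A=a', Z=1],
μ a x = E[Y^a | X=x, Z=1] (decomposed by iterated expectation), and
p x a = P(A=a | X=x, Z=1). -/
theorem stmt0 {X : Type*} (τ : ℝ) (hτ0 : 0 ≤ τ) (hτ1 : τ < 1)
    (μbar : Bool → X → Bool → ℝ) (μ : Bool → X → ℝ) (p : X → Bool → ℝ)
    (hp_nonneg : ∀ x a, 0 ≤ p x a) (hp_sum : ∀ x, p x true + p x false = 1)
    (hμbar_nonneg : ∀ (a : Bool) (x : X), 0 ≤ μbar a x a)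
    (hLIE : ∀ (a : Bool) (x : X),
      μ a x = μbar a x true * p x true + μbar a x false * p x false)
    (hsens : ∀ (x : X) (a a' : Bool),
      1 - τ ≤ μbar a x a' / μbar a x a ∧ μbar a x a' / μbar a x a ≤ 1 / (1 - τ))
    (x : X) :
    μ true x - μ false x ≤ (μbar true x true - μbar false x false)
      + (τ / (1 - τ)) * μbar true x true * p x false
      + τ * μbar false x false * p x true := by
  have hτ' : 0 < 1 - τ := by linarith
  have hb1 : 0 < μbar true x true := by
    rcases (hμbar_nonneg true x).lt_or_eq with h | h
    · exact h
    · exfalso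
      have h1 := (hsens x true false).1
      rw [← h, div_zero] at h1
      linarith
  have hb0 : 0 < μbar false x false := by
    rcases (hμbar_nonneg false x).lt_or_eq with h | h
    · exact h
    · exfalso
      have h1 := (hsens x false true).1
      rw [← h, div_zero] at h1
      linarith
  have h1 : μbar true x false * (1 - τ) ≤ μbar true x true := by
    have h := (hsens x true false).2
    rw [div_le_div_iff₀ hb1 hτ'] at h
    linarith
  have h0 : (1 - τ) * μbar false x false ≤ μbar false x true := by
    have h := (hsens x false true).1
    rw [le_div_iff₀ hb0] at h
    linarith
  have hkey : μbar true x true / (1 - τ)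
      = μbar true x true + τ / (1 - τ) * μbar true x true := by
    field_simp
    ring
  have h1' : μbar true x false ≤ μbar true x true / (1 - τ) := by
    rw [le_div_iff₀ hτ']; linarith
  have hp1 := hp_nonneg x true
  have hp0 := hp_nonneg x false
  have hsum := hp_sum x
  rw [hLIE, hLIE]
  nlinarith [mul_le_mul_of_nonneg_right (hkey ▸ h1') hp0,
    mul_le_mul_of_nonneg_right h0 hp1]
end

section
/- Under the same sensitivity assumption 1-τ ≤ μ̄_a(x,a')/μ̄_a(x,a) ≤ 1/(1-τ) for all (x,a,a'), the conditional treatment effect satisfies the lower bound ψ(x) ≥ ψ̄(x) - τ·μ̄₁(x,1)·P(A=0|X=x,Z=1) - (τ/(1-τ))·μ̄₀(x,0)·P(A=1|X=x,Z=1). -/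
/-- Sensitivity-analysis lower bound on the conditional treatment effect
ψ(x) = μ₁(x) − μ₀(x), same setup as the upper bound. -/
theorem stmt1 {X : Type*} (τ : ℝ) (hτ0 : 0 ≤ τ) (hτ1 : τ < 1)
    (μbar : Bool → X → Bool → ℝ) (μ : Bool → X → ℝ) (p : X → Bool → ℝ)
    (hp_nonneg : ∀ x a, 0 ≤ p x a) (hp_sum : ∀ x, p x true + p x false = 1)
    (hμbar_nonneg : ∀ (a : Bool) (x : X), 0 ≤ μbar a x a)
    (hLIE : ∀ (a : Bool) (x : X),
      μ a x = μbar a x true * p x true + μbar a x false * p x false)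
    (hsens : ∀ (x : X) (a a' : Bool),
      1 - τ ≤ μbar a x a' / μbar a x a ∧ μbar a x a' / μbar a x a ≤ 1 / (1 - τ))
    (x : X) :
    μ true x - μ false x ≥ (μbar true x true - μbar false x false)
      - τ * μbar true x true * p x false
      - (τ / (1 - τ)) * μbar false x false * p x true := by
  have hτ' : (0:ℝ) < 1 - τ := by linarith
  have hA : 0 < μbar true x true := by
    rcases lt_or_eq_of_le (hμbar_nonneg true x) with h | h
    · exact h
    · exfalso
      have := (hsens x true false).1
      rw [← h, div_zero] at this
      linarith
  have hB : 0 < μbar false x false := by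
    rcases lt_or_eq_of_le (hμbar_nonneg false x) with h | h
    · exact h
    · exfalso
      have := (hsens x false true).1
      rw [← h, div_zero] at this
      linarith
  have h1 : (1 - τ) * μbar true x true ≤ μbar true x false := by
    have := (hsens x true false).1
    rw [le_div_iff₀ hA] at this
    linarith
  have h2 : μbar false x true ≤ μbar false x false / (1 - τ) := by
    have := (hsens x false true).2
    rw [div_le_div_iff₀ hB hτ'] at this
    rw [le_div_iff₀ hτ']
    linarith
  have hs := hp_sum x
  have hpt := hp_nonneg x true
  have hpf := hp_nonneg x false
  rw [hLIE true x, hLIE false x]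
  have h2' : μbar false x true * p x true ≤ μbar false x false / (1 - τ) * p x true :=
    mul_le_mul_of_nonneg_right h2 hpt
  have h1' : (1 - τ) * μbar true x true * p x false ≤ μbar true x false * p x false :=
    mul_le_mul_of_nonneg_right h1 hpf
  have key : μbar false x false / (1 - τ) = μbar false x false + (τ / (1 - τ)) * μbar false x false := by
    field_simp
    ring
  nlinarith [key]
end

section
/- Assume: (i) E[Y^a | X, Z=1, A=a'] = E[Y^a | X, V=1, A=a'] for all a, a' (random sample selection); (ii) E[Y^a | X, V=1, A=a'] = E[Y^a | X, V=1, A=a] (no unmeasured confounding); and (iii) A=a implies Y = Y^a (consistency). Then E[Y^a | X, Z=1] = E[Y | X, A=a, Z=1]. -/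
open MeasureTheory ProbabilityTheory

/-- Identification of mean potential outcomes: under random sample selection,
no unmeasured confounding, and consistency (all conditional on a fixed
covariate value), E[Y^a | Z=1] = E[Y | A=a, Z=1]. Conditional expectations are
integrals with respect to the conditional measure P[|s]. -/
theorem stmt3 {Ω : Type*} [MeasurableSpace Ω]
    (P : Measure Ω) [IsProbabilityMeasure P]
    (Y : Ω → ℝ) (Ypot : Bool → Ω → ℝ) (A : Ω → Bool)
    (Zs Vs : Set Ω) (pA : Bool → ℝ)
    (hpA : ∀ a' : Bool, pA a' = ((P[|Zs]) {ω | A ω = a'}).toReal)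
    (hpos : ∀ a' : Bool, 0 < pA a')
    (hsum : pA true + pA false = 1)
    -- law of iterated expectations over A
    (hLIE : ∀ a : Bool,
      ∫ ω, Ypot a ω ∂(P[|Zs]) =
        pA true * ∫ ω, Ypot a ω ∂(P[|Zs ∩ {ω | A ω = true}])
          + pA false * ∫ ω, Ypot a ω ∂(P[|Zs ∩ {ω | A ω = false}]))
    -- (i) random sample selection
    (hRSS : ∀ a a' : Bool,
      ∫ ω, Ypot a ω ∂(P[|Zs ∩ {ω | A ω = a'}]) =
        ∫ ω, Ypot a ω ∂(P[|Vs ∩ {ω | A ω = a'}]))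
    -- (ii) no unmeasured confounding
    (hNUC : ∀ a a' : Bool,
      ∫ ω, Ypot a ω ∂(P[|Vs ∩ {ω | A ω = a'}]) =
        ∫ ω, Ypot a ω ∂(P[|Vs ∩ {ω | A ω = a}]))
    -- (iii) consistency
    (hcons : ∀ (a : Bool) (ω : Ω), A ω = a → Y ω = Ypot a ω)
    (a : Bool) :
    ∫ ω, Ypot a ω ∂(P[|Zs]) = ∫ ω, Y ω ∂(P[|Zs ∩ {ω | A ω = a}]) := by
  classical
  set t : Set Ω := {ω | A ω = a} with ht
  -- the common value
  set I : ℝ := ∫ ω, Ypot a ω ∂(P[|Vs ∩ {ω | A ω = a}]) with hI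
  have key : ∫ ω, Ypot a ω ∂(P[|Zs]) = ∫ ω, Ypot a ω ∂(P[|Zs ∩ t]) := by
    have h1 : ∫ ω, Ypot a ω ∂(P[|Zs ∩ {ω | A ω = true}]) = I := by
      rw [hRSS a true, hNUC a true]
    have h2 : ∫ ω, Ypot a ω ∂(P[|Zs ∩ {ω | A ω = false}]) = I := by
      rw [hRSS a false, hNUC a false]
    have h3 : ∫ ω, Ypot a ω ∂(P[|Zs ∩ t]) = I := by
      rw [ht, hRSS a a, hNUC a a]
    rw [hLIE a, h1, h2, h3, ← add_mul, hsum, one_mul]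
  rw [key]
  -- Now show Y = Ypot a a.e. w.r.t. P[|Zs ∩ t]
  set μ : Measure Ω := P[|Zs] with hμ
  have hPZs : P Zs ≠ 0 := by
    intro h0
    have hc : μ = 0 := by
      rw [hμ, ProbabilityTheory.cond, Measure.restrict_eq_zero.mpr h0, smul_zero]
    have := hpos true
    rw [hpA true, hc] at this
    simp at this
  have hμuniv : μ Set.univ = 1 := by
    rw [hμ, ProbabilityTheory.cond, Measure.smul_apply, smul_eq_mul,
      Measure.restrict_apply MeasurableSet.univ, Set.univ_inter,
      ENNReal.inv_mul_cancel hPZs (measure_ne_top P Zs)]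
  have htop : ∀ s : Set Ω, μ s ≠ ⊤ := fun s =>
    (lt_of_le_of_lt (le_trans (measure_mono (Set.subset_univ s)) hμuniv.le)
      ENNReal.one_lt_top).ne
  have hμsum : μ t + μ tᶜ = 1 := by
    rw [← ENNReal.toReal_eq_one_iff, ENNReal.toReal_add (htop t) (htop tᶜ)]
    have h1 := hpA a
    have h2 : pA (!a) = (μ tᶜ).toReal := by
      rw [hpA (!a)]
      congr 1
      congr 1
      ext ω
      simp [ht]
      cases a <;> simp
    have := hsum
    cases a <;> simp at h1 h2 ⊢ <;> rw [← h1, ← h2] <;> linarith [hsum]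
  set u : Set Ω := toMeasurable μ t with hu
  set v : Set Ω := toMeasurable μ tᶜ with hv
  have hum : MeasurableSet u := measurableSet_toMeasurable μ t
  have hvm : MeasurableSet v := measurableSet_toMeasurable μ tᶜ
  have huv : u ∪ v = Set.univ := by
    apply Set.eq_univ_of_univ_subset
    intro ω _
    by_cases hω : ω ∈ t
    · exact Or.inl (subset_toMeasurable μ t hω)
    · exact Or.inr (subset_toMeasurable μ tᶜ hω)
  have hiuv : μ (u ∩ v) = 0 := by
    have := measure_union_add_inter (μ := μ) u hvm
    rw [huv, hμuniv, measure_toMeasurable, measure_toMeasurable, hμsum] at this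
    have h1 : (1 : ENNReal) + μ (u ∩ v) = 1 + 0 := by rw [add_zero]; exact this
    exact (ENNReal.add_right_inj ENNReal.one_ne_top).mp h1
  have hPuv : P ((u ∩ v) ∩ Zs) = 0 := by
    have : μ (u ∩ v) = (P Zs)⁻¹ * P ((u ∩ v) ∩ Zs) := by
      rw [hμ, ProbabilityTheory.cond, Measure.smul_apply, smul_eq_mul,
        Measure.restrict_apply (hum.inter hvm)]
    rw [this] at hiuv
    rcases mul_eq_zero.mp hiuv with h | h
    · exact absurd (ENNReal.inv_eq_zero.mp h) (measure_ne_top P Zs)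
    · exact h
  -- B covers tᶜ and meets Zs ∩ t only inside u ∩ v
  have hν : (P.restrict (Zs ∩ t)) tᶜ = 0 := by
    have hBm : MeasurableSet (uᶜ ∪ (u ∩ v)) := hum.compl.union (hum.inter hvm)
    have hsub : tᶜ ⊆ uᶜ ∪ (u ∩ v) := by
      intro ω hω
      by_cases hωu : ω ∈ u
      · exact Or.inr ⟨hωu, subset_toMeasurable μ tᶜ hω⟩
      · exact Or.inl hωu
    refine le_antisymm ?_ zero_le
    calc (P.restrict (Zs ∩ t)) tᶜ ≤ (P.restrict (Zs ∩ t)) (uᶜ ∪ (u ∩ v)) :=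
          measure_mono hsub
      _ = P ((uᶜ ∪ (u ∩ v)) ∩ (Zs ∩ t)) := Measure.restrict_apply hBm
      _ ≤ P ((u ∩ v) ∩ Zs) := by
          apply measure_mono
          rintro ω ⟨hB, hZ, hT⟩
          rcases hB with h | h
          · exact absurd (subset_toMeasurable μ t hT) h
          · exact ⟨h, hZ⟩
      _ = 0 := hPuv
  have hae : ∀ᵐ ω ∂(P[|Zs ∩ t]), ω ∈ t := by
    rw [ae_iff]
    have : {ω | ¬ ω ∈ t} = tᶜ := rfl
    rw [this, ProbabilityTheory.cond, Measure.smul_apply, smul_eq_mul, hν, mul_zero]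
  exact integral_congr_ae (hae.mono fun ω hω => (hcons a ω hω).symm)
end

section
/- The total effect decomposes exactly into four interventional effects: ψ = ψ_{IDE,1} + ψ_{M₁,0} + ψ_{M₂,0} + ψ_{Cov,0}, where ψ_{Cov,0} is defined as the remainder; moreover, if M₁ and M₂ are conditionally independent given (X, A, Z=1) under both treatment levels, then the covariant effect satisfies ψ_{Cov,0} = Σ_{m₁,m₂} E[Y^{1 m₁ m₂}|X,Z=1]·(P(M₁¹=m₁,M₂¹=m₂|X,Z=1) − P(M₁¹=m₁|X,Z=1)P(M₂¹=m₂|X,Z=1)) − E[Y^{0 m₁ m₂}|X,Z=1]·(P(M₁⁰=m₁,M₂⁰=m₂|X,Z=1) − P(M₁⁰=m₁|X,Z=1)P(M₂⁰=m₂|X,Z=1)) averaged over the sample, which equals zero. -/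
/-- Vansteelandt–Daniel interventional effect decomposition: the total effect
ψ decomposes exactly as ψ = ψ_{IDE,1} + ψ_{M₁,0} + ψ_{M₂,0} + ψ_{Cov,0}
(with ψ_{Cov,0} the remainder); moreover, if the mediators are conditionally
independent under both treatment levels, the covariant effect equals the
stated covariance-type expression, which is zero. -/
theorem stmt6 {X ι M1t M2t : Type*} [Fintype ι] [Nonempty ι]
    [Fintype M1t] [Fintype M2t]
    (xs : ι → X)
    (ν : Bool → M1t → M2t → X → ℝ) (pj : Bool → M1t → M2t → X → ℝ)
    (p1 : Bool → M1t → X → ℝ) (p2 : Bool → M2t → X → ℝ)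
    (hp1 : ∀ (a : Bool) (m1 : M1t) (x : X), p1 a m1 x = ∑ m2 : M2t, pj a m1 m2 x)
    (hp2 : ∀ (a : Bool) (m2 : M2t) (x : X), p2 a m2 x = ∑ m1 : M1t, pj a m1 m2 x)
    (Pn : (X → ℝ) → ℝ)
    (hPn : ∀ f, Pn f = (∑ i, f (xs i)) / (Fintype.card ι))
    (ψ ψIDE ψM1 ψM2 ψCov : ℝ)
    (hψ : ψ = Pn (fun x => ∑ m1 : M1t, ∑ m2 : M2t,
      (ν true m1 m2 x * pj true m1 m2 x - ν false m1 m2 x * pj false m1 m2 x)))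
    (hIDE : ψIDE = Pn (fun x => ∑ m1 : M1t, ∑ m2 : M2t,
      (ν true m1 m2 x - ν false m1 m2 x) * pj true m1 m2 x))
    (hM1 : ψM1 = Pn (fun x => ∑ m1 : M1t, ∑ m2 : M2t,
      ν false m1 m2 x * (p1 true m1 x - p1 false m1 x) * p2 false m2 x))
    (hM2 : ψM2 = Pn (fun x => ∑ m1 : M1t, ∑ m2 : M2t,
      ν false m1 m2 x * (p2 true m2 x - p2 false m2 x) * p1 true m1 x))
    (hCov : ψCov = ψ - ψIDE - ψM1 - ψM2) :
    ψ = ψIDE + ψM1 + ψM2 + ψCov ∧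
    ((∀ (a : Bool) (m1 : M1t) (m2 : M2t) (x : X),
        pj a m1 m2 x = p1 a m1 x * p2 a m2 x) →
      ψCov = Pn (fun x => ∑ m1 : M1t, ∑ m2 : M2t,
        (ν true m1 m2 x * (pj true m1 m2 x - p1 true m1 x * p2 true m2 x)
          - ν false m1 m2 x * (pj false m1 m2 x - p1 false m1 x * p2 false m2 x)))
        ∧ ψCov = 0) := by

  refine ⟨by linarith, fun hind => ?_⟩
  have hzero : ψCov = 0 := by
    rw [hCov, hψ, hIDE, hM1, hM2, hPn, hPn, hPn, hPn,
      div_sub_div_same, div_sub_div_same, div_sub_div_same]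
    rw [show (0:ℝ) = 0 / (Fintype.card ι : ℝ) by simp]
    congr 1
    rw [← Finset.sum_sub_distrib, ← Finset.sum_sub_distrib, ← Finset.sum_sub_distrib]
    apply Finset.sum_eq_zero
    intro i _
    simp only [← Finset.sum_sub_distrib]
    apply Finset.sum_eq_zero
    intro m1 _
    apply Finset.sum_eq_zero
    intro m2 _
    simp only [hind]
    ring
  refine ⟨?_, hzero⟩
  rw [hzero, hPn]
  simp [hind]
end

section
/- Under the relaxed sensitivity model 1−τ ≤ E[Y^a | X=x, V=1, Q_a=a'] / E[Y^a | X=x, V=1, Q_a=a] ≤ 1/(1−τ) for all (x,a,a') with Q_a = 1(A=a)RS, and without any random-sample-selection assumption, the population contrast satisfies: ψ̃(x) − τ·μ̃₁(x,1) − (τ/(1−τ))·μ̃₀(x,0) ≤ E[Y¹−Y⁰|X=x,V=1] ≤ ψ̃(x) + (τ/(1−τ))·μ̃₁(x,1) + τ·μ̃₀(x,0), where μ̃_a(x,a') = E[Y^a|X=x,V=1,Q_a=a'] and ψ̃(x) = μ̃₁(x,1) − μ̃₀(x,0). -/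
/-- Sensitivity bounds without random sample selection: with
μ̃ a x b = E[Y^a | X=x, V=1, Q_a = b] (b = true meaning Q_a = 1, observed in
arm a), pop a x = E[Y^a | X=x, V=1] decomposed by the unknown selection
probability q a x ∈ [0,1], the population contrast is bounded by the stated
expressions. -/
theorem stmt11 {X : Type*} (τ : ℝ) (hτ0 : 0 ≤ τ) (hτ1 : τ < 1)
    (μt : Bool → X → Bool → ℝ) (pop : Bool → X → ℝ) (q : Bool → X → ℝ)
    (hrange : ∀ (a : Bool) (x : X) (b : Bool), 0 ≤ μt a x b ∧ μt a x b ≤ 1)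
    (hq : ∀ (a : Bool) (x : X), 0 ≤ q a x ∧ q a x ≤ 1)
    (hLTE : ∀ (a : Bool) (x : X),
      pop a x = μt a x true * q a x + μt a x false * (1 - q a x))
    (hsens : ∀ (a : Bool) (x : X) (b : Bool),
      1 - τ ≤ μt a x b / μt a x true ∧ μt a x b / μt a x true ≤ 1 / (1 - τ))
    (x : X) :
    (μt true x true - μt false x true) - τ * μt true x true
        - (τ / (1 - τ)) * μt false x true
      ≤ pop true x - pop false x ∧
    pop true x - pop false x
      ≤ (μt true x true - μt false x true) + (τ / (1 - τ)) * μt true x true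
        + τ * μt false x true := by
  have hτ' : 0 < 1 - τ := by linarith
  have key : ∀ a : Bool, μt a x true - τ * μt a x true ≤ pop a x ∧
      pop a x ≤ μt a x true + (τ / (1 - τ)) * μt a x true := by
    intro a
    have hT0 : 0 ≤ μt a x true := (hrange a x true).1
    have hTpos : 0 < μt a x true := by
      rcases hT0.lt_or_eq with h | h
      · exact h
      · exfalso
        have := (hsens a x true).1
        rw [← h, div_zero] at this
        linarith
    have h1 : (1 - τ) * μt a x true ≤ μt a x false := by
      have := (hsens a x false).1
      calc (1 - τ) * μt a x true ≤ μt a x false / μt a x true * μt a x true := by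
            exact mul_le_mul_of_nonneg_right this hT0
        _ = μt a x false := by field_simp
    have h2 : μt a x false ≤ μt a x true / (1 - τ) := by
      have := (hsens a x false).2
      have := mul_le_mul_of_nonneg_right this hT0
      rw [div_mul_eq_mul_div, div_mul_eq_mul_div, mul_div_assoc,
        div_self hTpos.ne', mul_one, one_mul] at this
      exact this
    have hq1 := (hq a x).1
    have hq2 := (hq a x).2
    have hL := hLTE a x
    constructor
    · -- pop = T + (F - T)*(1-q) ≥ T - τT
      nlinarith [mul_le_mul_of_nonneg_right h1 (by linarith : (0:ℝ) ≤ 1 - q a x),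
        mul_nonneg (mul_nonneg hτ0 hT0) hq1]
    · have hF : μt a x false - μt a x true ≤ (τ / (1 - τ)) * μt a x true := by
        rw [div_mul_eq_mul_div]
        rw [le_div_iff₀ hτ']
        have h2' : μt a x false * (1 - τ) ≤ μt a x true := (le_div_iff₀ hτ').mp h2
        nlinarith [h2', hT0]
      nlinarith [mul_le_mul_of_nonneg_right hF (by linarith : (0:ℝ) ≤ 1 - q a x),
        mul_nonneg (mul_nonneg (div_nonneg hτ0 hτ'.le) hT0) hq1]
  obtain ⟨l1, u1⟩ := key true
  obtain ⟨l0, u0⟩ := key false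
  constructor <;> [skip; skip] <;> · nlinarith [l1, u1, l0, u0]
end
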